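/- Let Σ be a finite alphabet and w, w̃ ∈ Σ* with m := ι(w) = ι(w̃) < k such that β_i = β̃_i for all i ∈ [m]. Then w ∼_k w̃ if and only if α_i ∼_{k−m} α̃_i for all i ∈ {0,1,…,m}, where α_i, β_i (resp. α̃_i, β̃_i) are the factors of the α-β-factorizations of w and w̃. -/

import Mathlib

open List

variable {α : Type*} [DecidableEq α] [Fintype α]

/-- Simon `k`-congruence: `u` and `v` have the same scattered factors
(subsequences) of length at most `k`. -/
def SimonCongr (k : ℕ) (u v : List α) : Prop :=
  ∀ s : List α, s.length ≤ k → (s.Sublist u ↔ s.Sublist v)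

/-- `w` is `k`-universal with respect to the alphabet `S`: every word of length `k`
over `S` is a scattered factor of `w`. -/
def UniversalOn (S : Finset α) (k : ℕ) (w : List α) : Prop :=
  ∀ s : List α, s.length = k → (∀ x ∈ s, x ∈ S) → s.Sublist w

/-- The universality index of `w` w.r.t. the alphabet `S`. -/
noncomputable def iotaOn (S : Finset α) (w : List α) : ℕ :=
  sSup {k | UniversalOn S k w}

/-- The universality index of `w` w.r.t. the full alphabet. -/
noncomputable def iotaUniv (w : List α) : ℕ := iotaOn Finset.univ w

/-- `a` is an arch w.r.t. `S`: it contains every letter of `S`, and its last letter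
belongs to `S` and occurs exactly once in `a`. -/
def IsArchOn (S : Finset α) (a : List α) : Prop :=
  (∀ x ∈ S, x ∈ a) ∧ ∃ a' x, a = a' ++ [x] ∧ x ∈ S ∧ x ∉ a'

/-- `(ars, r)` is the arch factorization of `w` w.r.t. `S`. -/
def IsArchFactOn (S : Finset α) (w : List α) (ars : List (List α)) (r : List α) : Prop :=
  w = ars.flatten ++ r ∧ (∀ a ∈ ars, IsArchOn S a) ∧ ¬ (∀ x ∈ S, x ∈ r)

/-- `(A, B)` is the α-β-factorization of `w` with `m` arches:
`αᵢ₋₁βᵢ` (for `i ∈ [m]`) together with rest `α_m` is the arch factorization of `w`, and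
`(β_{m-i}α_{m-i})^R` together with rest `α₀^R` is the arch factorization of `w^R`. -/
def IsAlphaBetaFact (w : List α) (m : ℕ) (A B : ℕ → List α) : Prop :=
  IsArchFactOn Finset.univ w (List.ofFn fun i : Fin m => A i.val ++ B (i.val + 1)) (A m) ∧
  IsArchFactOn Finset.univ w.reverse
    (List.ofFn fun i : Fin m => (B (m - i.val) ++ A (m - i.val)).reverse) ((A 0).reverse)

/-- The concatenation `αᵢ βᵢ₊₁ αᵢ₊₁ ⋯ βⱼ αⱼ`. -/
def abSeg (A B : ℕ → List α) (i j : ℕ) : List α :=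
  A i ++ (((List.Ico (i + 1) (j + 1)).map fun l => B l ++ A l).flatten)

/-- The core of a `β`-factor: the factor with its first and last letter removed. -/
def coreOf (b : List α) : List α := (b.drop 1).dropLast

section AuxLemmas

set_option linter.unusedSectionVars false
set_option maxHeartbeats 1000000

lemma myOfFn_val_eq (m : ℕ) (F : ℕ → List α) :
    (List.ofFn fun i : Fin m => F i.val) = (List.range m).map F := by
  rw [List.ofFn_eq_map, ← List.map_coe_finRange_eq_range, List.map_map]
  rfl

lemma myForceL {x : α} {c s t : List α} (hx : x ∉ c) (h : (x :: s) <+ (c ++ [x]) ++ t) :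
    s <+ t := by
  rw [List.append_assoc] at h
  obtain ⟨s₁, s₂, hsplit, h1, h2⟩ := List.sublist_append_iff.mp h
  cases s₁ with
  | nil =>
    simp only [List.nil_append] at hsplit
    subst hsplit
    exact List.cons_sublist_cons.mp h2
  | cons a s₁' =>
    simp only [List.cons_append, List.cons.injEq] at hsplit
    obtain ⟨rfl, -⟩ := hsplit
    exact absurd (h1.subset (List.mem_cons_self)) hx

lemma myPeelL (f : ℕ → α) (g : ℕ → List α) :
    ∀ (js : List ℕ), (∀ j ∈ js, ∃ c, g j = c ++ [f j] ∧ f j ∉ c) →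
    ∀ rest t : List α, (js.map f ++ rest) <+ ((js.map g).flatten ++ t) → rest <+ t := by
  intro js
  induction js with
  | nil => intro _ rest t h; simpa using h
  | cons j js ih =>
    intro hj rest t h
    obtain ⟨c, hc, hcx⟩ := hj j (List.mem_cons_self)
    simp only [List.map_cons, List.flatten_cons, List.cons_append, List.append_assoc] at h
    rw [hc] at h
    rw [List.append_assoc] at h
    have h' : (js.map f ++ rest) <+ ((js.map g).flatten ++ t) := by
      apply myForceL hcx
      rw [List.append_assoc]
      exact h
    exact ih (fun j' hj' => hj j' (List.mem_cons_of_mem _ hj')) rest t h'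

lemma myPeelR (f : ℕ → α) (g : ℕ → List α) (js : List ℕ)
    (hj : ∀ j ∈ js, ∃ c, g j = f j :: c ∧ f j ∉ c)
    (rest t : List α) (h : (rest ++ js.map f) <+ (t ++ (js.map g).flatten)) : rest <+ t := by
  have h' : (js.reverse.map f ++ rest.reverse)
      <+ ((js.reverse.map (fun j => (g j).reverse)).flatten ++ t.reverse) := by
    have h2 := h.reverse
    simp only [List.reverse_append, List.reverse_flatten, List.map_map, List.map_reverse,
      Function.comp] at h2 ⊢
    convert h2 using 2
    rfl
  have key := myPeelL f (fun j => (g j).reverse) js.reverse (by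
      intro j hjr
      obtain ⟨c, hc, hcx⟩ := hj j (List.mem_reverse.mp hjr)
      exact ⟨c.reverse, by simp [hc], by simpa using hcx⟩) rest.reverse t.reverse h'
  simpa using key

lemma myMapSub (f : ℕ → α) (g : ℕ → List α) :
    ∀ js : List ℕ, (∀ j ∈ js, f j ∈ g j) → js.map f <+ (js.map g).flatten := by
  intro js
  induction js with
  | nil => simp
  | cons j js ih =>
    intro h
    simp only [List.map_cons, List.flatten_cons]
    exact ((List.singleton_sublist.mpr (h j (List.mem_cons_self))).append
      (ih fun j' hj' => h j' (List.mem_cons_of_mem _ hj')) : [f j] ++ _ <+ _)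

lemma mySymm {k : ℕ} {u v : List α} (h : SimonCongr k u v) : SimonCongr k v u :=
  fun s hs => (h s hs).symm

lemma myTrans {k : ℕ} {u v t : List α} (h1 : SimonCongr k u v) (h2 : SimonCongr k v t) :
    SimonCongr k u t := fun s hs => (h1 s hs).trans (h2 s hs)

lemma myConsFullAux {k : ℕ} {p : List α} (hp : ∀ x : α, x ∈ p) :
    ∀ u v : List α, SimonCongr k u v → ∀ s : List α, s.length ≤ k + 1 →
      s <+ p ++ u → s <+ p ++ v := by
  intro u v h s hs hsub
  obtain ⟨s₁, s₂, rfl, h1, h2⟩ := List.sublist_append_iff.mp hsub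
  by_cases hlen : s₂.length ≤ k
  · exact h1.append ((h s₂ hlen).mp h2)
  · have hs1 : s₁ = [] := by
      rw [List.length_append] at hs
      exact List.eq_nil_of_length_eq_zero (by omega)
    subst hs1
    cases s₂ with
    | nil => simp at hlen
    | cons a s' =>
      have hs' : s' <+ u := (List.sublist_cons_self a s').trans h2
      have hv : s' <+ v := (h s' (by simp at hs; omega)).mp hs'
      exact ((List.singleton_sublist.mpr (hp a)).append hv : [a] ++ s' <+ p ++ v)

lemma myConsFull {k : ℕ} {u v p : List α} (hp : ∀ x : α, x ∈ p)
    (h : SimonCongr k u v) : SimonCongr (k + 1) (p ++ u) (p ++ v) :=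
  fun s hs => ⟨myConsFullAux hp u v h s hs, myConsFullAux hp v u (mySymm h) s hs⟩

lemma myAppFullAux {k : ℕ} {p : List α} (hp : ∀ x : α, x ∈ p) :
    ∀ u v : List α, SimonCongr k u v → ∀ s : List α, s.length ≤ k + 1 →
      s <+ u ++ p → s <+ v ++ p := by
  intro u v h s hs hsub
  obtain ⟨s₁, s₂, rfl, h1, h2⟩ := List.sublist_append_iff.mp hsub
  by_cases hlen : s₁.length ≤ k
  · exact ((h s₁ hlen).mp h1).append h2
  · have hs2 : s₂ = [] := by
      rw [List.length_append] at hs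
      exact List.eq_nil_of_length_eq_zero (by omega)
    subst hs2
    rcases List.eq_nil_or_concat s₁ with rfl | ⟨l', a, rfl⟩
    · simp at hlen
    · rw [List.concat_eq_append] at *
      have hl' : l' <+ u := (List.sublist_append_left l' [a]).trans h1
      have hv : l' <+ v := (h l' (by simp at hs ⊢; omega)).mp hl'
      rw [List.append_nil]
      exact hv.append (List.singleton_sublist.mpr (hp a))

lemma myAppFull {k : ℕ} {u v p : List α} (hp : ∀ x : α, x ∈ p)
    (h : SimonCongr k u v) : SimonCongr (k + 1) (u ++ p) (v ++ p) :=
  fun s hs => ⟨myAppFullAux hp u v h s hs, myAppFullAux hp v u (mySymm h) s hs⟩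

lemma myFlatLeft {k : ℕ} {u v : List α} (h : SimonCongr k u v) :
    ∀ L : List (List α), (∀ p ∈ L, ∀ x : α, x ∈ p) →
      SimonCongr (k + L.length) (L.flatten ++ u) (L.flatten ++ v) := by
  intro L
  induction L with
  | nil => intro _; simpa using h
  | cons p L ih =>
    intro hL
    have h1 := myConsFull (hL p (List.mem_cons_self))
      (ih fun q hq => hL q (List.mem_cons_of_mem _ hq))
    have : k + (p :: L).length = k + L.length + 1 := by simp; omega
    rw [this]
    simpa only [List.flatten_cons, List.append_assoc] using h1

lemma myFlatRight {k : ℕ} {u v : List α} (h : SimonCongr k u v) :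
    ∀ L : List (List α), (∀ p ∈ L, ∀ x : α, x ∈ p) →
      SimonCongr (k + L.length) (u ++ L.flatten) (v ++ L.flatten) := by
  intro L
  induction L generalizing k u v h with
  | nil => intro _; simpa using h
  | cons p L ih =>
    intro hL
    have h1 := myAppFull (hL p (List.mem_cons_self)) h
    have h2 := ih h1 (fun q hq => hL q (List.mem_cons_of_mem _ hq))
    have : k + (p :: L).length = k + 1 + L.length := by simp; omega
    rw [this]
    simpa only [List.flatten_cons, List.append_assoc] using h2

lemma myTailEq (A B : ℕ → List α) (m : ℕ) :
    ∀ d i, i + d = m →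
      ((List.Ico i m).map (fun j => A j ++ B (j+1))).flatten ++ A m
        = A i ++ ((List.Ico i m).map (fun j => B (j+1) ++ A (j+1))).flatten := by
  intro d
  induction d with
  | zero =>
    intro i h
    have : i = m := by omega
    subst this
    simp [List.Ico.self_empty]
  | succ d ih =>
    intro i h
    have hlt : i < m := by omega
    rw [List.Ico.eq_cons hlt]
    simp only [List.map_cons, List.flatten_cons, List.append_assoc]
    rw [ih (i+1) (by omega)]

lemma mySplit (A B : ℕ → List α) (m : ℕ) (w : List α)
    (hw : w = ((List.range m).map (fun j => A j ++ B (j+1))).flatten ++ A m)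
    (i : ℕ) (hi : i ≤ m) :
    w = ((List.range i).map (fun j => A j ++ B (j+1))).flatten
        ++ (A i ++ ((List.Ico i m).map (fun j => B (j+1) ++ A (j+1))).flatten) := by
  have hr : List.range m = List.range i ++ List.Ico i m := by
    rw [← List.Ico.zero_bot m, ← List.Ico.zero_bot i,
      List.Ico.append_consecutive (Nat.zero_le i) hi]
  rw [hw, hr, List.map_append, List.flatten_append, List.append_assoc,
    myTailEq A B m (m - i) i (by omega)]

lemma myWeq {w : List α} {m : ℕ} {A B : ℕ → List α} (hfac : IsAlphaBetaFact w m A B) :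
    w = ((List.range m).map (fun j => A j ++ B (j+1))).flatten ++ A m := by
  have := hfac.1.1
  rwa [myOfFn_val_eq m (fun j => A j ++ B (j+1))] at this

lemma myArch {w : List α} {m : ℕ} {A B : ℕ → List α} (hfac : IsAlphaBetaFact w m A B) :
    ∀ j < m, IsArchOn Finset.univ (A j ++ B (j+1)) := by
  intro j hj
  have h := hfac.1.2.1
  rw [myOfFn_val_eq m (fun j => A j ++ B (j+1))] at h
  exact h _ (List.mem_map_of_mem (List.mem_range.mpr hj))

lemma myRaArch {w : List α} {m : ℕ} {A B : ℕ → List α} (hfac : IsAlphaBetaFact w m A B) :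
    ∀ j, 1 ≤ j → j ≤ m → IsArchOn Finset.univ ((B j ++ A j).reverse) := by
  intro j h1 h2
  have h := hfac.2.2.1
  rw [myOfFn_val_eq m (fun t => (B (m - t) ++ A (m - t)).reverse)] at h
  have := h _ (List.mem_map_of_mem (List.mem_range.mpr (show m - j < m by omega)))
  simpa [show m - (m - j) = j by omega] using this

lemma myRaFull {w : List α} {m : ℕ} {A B : ℕ → List α} (hfac : IsAlphaBetaFact w m A B) :
    ∀ j, 1 ≤ j → j ≤ m → ∀ x : α, x ∈ B j ++ A j := by
  intro j h1 h2 x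
  have := (myRaArch hfac j h1 h2).1 x (Finset.mem_univ x)
  rw [List.mem_reverse] at this
  exact this

lemma myRaHead {w : List α} {m : ℕ} {A B : ℕ → List α} (hfac : IsAlphaBetaFact w m A B) :
    ∀ j, 1 ≤ j → j ≤ m → ∃ x d, B j ++ A j = x :: d ∧ x ∉ d := by
  intro j h1 h2
  obtain ⟨-, a', x, e, -, hx⟩ := myRaArch hfac j h1 h2
  refine ⟨x, a'.reverse, ?_, by simpa using hx⟩
  have : (B j ++ A j) = (a' ++ [x]).reverse := by rw [← e, List.reverse_reverse]
  simpa using this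

lemma myRest {w : List α} {m : ℕ} {A B : ℕ → List α} (hfac : IsAlphaBetaFact w m A B) :
    ¬ ∀ x : α, x ∈ A m := by
  intro h
  exact hfac.1.2.2 (fun x _ => h x)

lemma myBne {w : List α} {m : ℕ} {A B : ℕ → List α} (hfac : IsAlphaBetaFact w m A B) :
    ∀ j, 1 ≤ j → j ≤ m → B j ≠ [] := by
  have aux : ∀ d j, 1 ≤ j → j ≤ m → j + d = m → B j = [] → ∀ x : α, x ∈ A m := by
    intro d
    induction d with
    | zero =>
      intro j h1 h2 h3 hB x
      have hj : j = m := by omega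
      subst hj
      have := myRaFull hfac j h1 h2 x
      rwa [hB, List.nil_append] at this
    | succ d ih =>
      intro j h1 h2 h3 hB x
      have hjm : j < m := by omega
      have hAfull : ∀ y : α, y ∈ A j := by
        intro y
        have := myRaFull hfac j h1 h2 y
        rwa [hB, List.nil_append] at this
      obtain ⟨-, a', y, e, -, hy⟩ := myArch hfac j hjm
      have hB1 : B (j+1) = [] := by
        rcases List.eq_nil_or_concat (B (j+1)) with h | ⟨c, z, hc⟩
        · exact h
        · exfalso
          rw [List.concat_eq_append] at hc
          rw [hc, ← List.append_assoc] at e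
          obtain ⟨e1, e2⟩ := List.append_inj' e rfl
          have hz : z = y := by simpa using e2
          exact hy (e1 ▸ List.mem_append_left c (hAfull y))
      exact ih (j+1) (by omega) (by omega) (by omega) hB1 x
  intro j h1 h2 hB
  exact myRest hfac (aux (m - j) j h1 h2 (by omega) hB)

lemma myKeyIff {w : List α} {m : ℕ} {A B : ℕ → List α} (hfac : IsAlphaBetaFact w m A B)
    (q p : ℕ → α)
    (hq : ∀ j, 1 ≤ j → j ≤ m → ∃ c, B j = c ++ [q j])
    (hp : ∀ j, 1 ≤ j → j ≤ m → ∃ c, B j = p j :: c)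
    (i : ℕ) (hi : i ≤ m) (s : List α) :
    (((List.range i).map (fun j => q (j+1)) ++ s) ++ (List.Ico i m).map (fun j => p (j+1))) <+ w
      ↔ s <+ A i := by
  have hsplit := mySplit A B m w (myWeq hfac) i hi
  constructor
  · intro h
    rw [hsplit, List.append_assoc] at h
    have h1 : (s ++ (List.Ico i m).map (fun j => p (j+1)))
        <+ (A i ++ ((List.Ico i m).map (fun j => B (j+1) ++ A (j+1))).flatten) := by
      refine myPeelL (fun j => q (j+1)) (fun j => A j ++ B (j+1)) (List.range i) ?_ _ _ h
      intro j hj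
      have hjm : j < m := lt_of_lt_of_le (List.mem_range.mp hj) hi
      obtain ⟨-, a', x, e, -, hx⟩ := myArch hfac j hjm
      obtain ⟨c, hc⟩ := hq (j+1) (by omega) (by omega)
      rw [hc, ← List.append_assoc] at e
      obtain ⟨e1, e2⟩ := List.append_inj' e rfl
      have hqx : q (j+1) = x := by simpa using e2
      refine ⟨A j ++ c, ?_, ?_⟩
      · show A j ++ B (j+1) = (A j ++ c) ++ [q (j+1)]
        rw [hc, ← List.append_assoc]
      · show q (j+1) ∉ A j ++ c
        rw [hqx, e1]; exact hx
    refine myPeelR (fun j => p (j+1)) (fun j => B (j+1) ++ A (j+1)) (List.Ico i m) ?_ s (A i) h1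
    intro j hj
    have hjm : j < m := (List.Ico.mem.mp hj).2
    obtain ⟨x, d, e, hx⟩ := myRaHead hfac (j+1) (by omega) (by omega)
    obtain ⟨c, hc⟩ := hp (j+1) (by omega) (by omega)
    have hxp : x = p (j+1) := by
      rw [hc] at e
      exact (List.cons.injEq _ _ _ _ ▸ e).1.symm
    refine ⟨d, ?_, ?_⟩
    · show B (j+1) ++ A (j+1) = p (j+1) :: d
      rw [e, hxp]
    · show p (j+1) ∉ d
      rw [← hxp]; exact hx
  · intro h
    rw [hsplit, ← List.append_assoc]
    refine List.Sublist.append (List.Sublist.append ?_ h) ?_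
    · refine myMapSub _ _ (List.range i) ?_
      intro j hj
      have hjm : j < m := lt_of_lt_of_le (List.mem_range.mp hj) hi
      obtain ⟨c, hc⟩ := hq (j+1) (by omega) (by omega)
      exact List.mem_append_right _ (by simp [hc])
    · refine myMapSub _ _ (List.Ico i m) ?_
      intro j hj
      have hjm : j < m := (List.Ico.mem.mp hj).2
      obtain ⟨c, hc⟩ := hp (j+1) (by omega) (by omega)
      exact List.mem_append_left _ (by simp [hc])

end AuxLemmas

/-- with identical `β`-factors, `w ∼ₖ w̃` iff all `α`-factors are
`(k−m)`-congruent. -/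
theorem simonCongr_iff_alpha_congr (k m : ℕ) (w w' : List α) (A B A' B' : ℕ → List α)
    (hw : IsAlphaBetaFact w m A B) (hw' : IsAlphaBetaFact w' m A' B')
    (hiw : iotaUniv w = m) (hiw' : iotaUniv w' = m) (hmk : m < k)
    (hB : ∀ i, 1 ≤ i → i ≤ m → B i = B' i) :
    SimonCongr k w w' ↔ ∀ i ≤ m, SimonCongr (k - m) (A i) (A' i) := by
  classical
  have hmk' : m ≤ k := le_of_lt hmk
  have hne : Nonempty α := by
    by_contra h
    exact myRest hw (fun x => absurd ⟨x⟩ h)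
  obtain ⟨a0⟩ := hne
  constructor
  · -- forward direction
    intro hcong i hi s hs
    set q : ℕ → α := fun j => ((B j).getLast?).getD a0 with hqdef
    set p : ℕ → α := fun j => ((B j).head?).getD a0 with hpdef
    have hq : ∀ j, 1 ≤ j → j ≤ m → ∃ c, B j = c ++ [q j] := by
      intro j h1 h2
      rcases List.eq_nil_or_concat (B j) with h | ⟨c, x, hc⟩
      · exact absurd h (myBne hw j h1 h2)
      · rw [List.concat_eq_append] at hc
        refine ⟨c, ?_⟩
        rw [hc]
        congr 1
        have : q j = x := by simp [hqdef, hc]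
        rw [this]
    have hp : ∀ j, 1 ≤ j → j ≤ m → ∃ c, B j = p j :: c := by
      intro j h1 h2
      cases hc : B j with
      | nil => exact absurd hc (myBne hw j h1 h2)
      | cons x c =>
        refine ⟨c, ?_⟩
        have : p j = x := by simp [hpdef, hc]
        rw [this]
    have hq' : ∀ j, 1 ≤ j → j ≤ m → ∃ c, B' j = c ++ [q j] := by
      intro j h1 h2; rw [← hB j h1 h2]; exact hq j h1 h2
    have hp' : ∀ j, 1 ≤ j → j ≤ m → ∃ c, B' j = p j :: c := by
      intro j h1 h2; rw [← hB j h1 h2]; exact hp j h1 h2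
    have k1 := myKeyIff hw q p hq hp i hi s
    have k2 := myKeyIff hw' q p hq' hp' i hi s
    have hlen : (((List.range i).map (fun j => q (j+1)) ++ s)
        ++ (List.Ico i m).map (fun j => p (j+1))).length ≤ k := by
      simp only [List.length_append, List.length_map, List.length_range, List.Ico.length]
      omega
    exact k1.symm.trans ((hcong _ hlen).trans k2)
  · -- backward direction
    intro hAc
    have harchfull' : ∀ j < m, ∀ x : α, x ∈ A' j ++ B (j+1) := by
      intro j hj x
      have := (myArch hw' j hj).1 x (Finset.mem_univ x)
      rwa [← hB (j+1) (by omega) (by omega)] at this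
    have step : ∀ i ≤ m, SimonCongr k
        (((List.range i).map (fun j => A' j ++ B (j+1))).flatten
          ++ (A i ++ ((List.Ico i m).map (fun j => B (j+1) ++ A (j+1))).flatten))
        (((List.range i).map (fun j => A' j ++ B (j+1))).flatten
          ++ (A' i ++ ((List.Ico i m).map (fun j => B (j+1) ++ A (j+1))).flatten)) := by
      intro i hi
      have h0 := hAc i hi
      have h1 := myFlatRight h0 ((List.Ico i m).map (fun j => B (j+1) ++ A (j+1))) (by
        intro pl hpl x
        obtain ⟨j, hj, rfl⟩ := List.mem_map.mp hpl
        have hjm : j < m := (List.Ico.mem.mp hj).2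
        exact myRaFull hw (j+1) (by omega) (by omega) x)
      have h2 := myFlatLeft h1 ((List.range i).map (fun j => A' j ++ B (j+1))) (by
        intro pl hpl x
        obtain ⟨j, hj, rfl⟩ := List.mem_map.mp hpl
        exact harchfull' j (lt_of_lt_of_le (List.mem_range.mp hj) hi) x)
      have hl : k - m + ((List.Ico i m).map (fun j => B (j+1) ++ A (j+1))).length
          + ((List.range i).map (fun j => A' j ++ B (j+1))).length = k := by
        simp only [List.length_map, List.length_range, List.Ico.length]
        omega
      rwa [hl] at h2
    have chain : ∀ i, i ≤ m → SimonCongr k w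
        (((List.range i).map (fun j => A' j ++ B (j+1))).flatten
          ++ (A i ++ ((List.Ico i m).map (fun j => B (j+1) ++ A (j+1))).flatten)) := by
      intro i
      induction i with
      | zero =>
        intro _
        have hs0 := mySplit A B m w (myWeq hw) 0 (Nat.zero_le m)
        simp only [List.range_zero, List.map_nil, List.flatten_nil, List.nil_append] at hs0 ⊢
        rw [← hs0]
        exact fun s _ => Iff.rfl
      | succ i ih =>
        intro hi
        have hi' : i ≤ m := by omega
        have hlt : i < m := by omega
        have c1 := ih hi'
        have c2 := step i hi'
        have heq : (((List.range i).map (fun j => A' j ++ B (j+1))).flatten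
              ++ (A' i ++ ((List.Ico i m).map (fun j => B (j+1) ++ A (j+1))).flatten))
            = (((List.range (i+1)).map (fun j => A' j ++ B (j+1))).flatten
              ++ (A (i+1) ++ ((List.Ico (i+1) m).map (fun j => B (j+1) ++ A (j+1))).flatten)) := by
          rw [List.range_succ, List.Ico.eq_cons hlt]
          simp only [List.map_append, List.map_cons, List.map_nil, List.flatten_append,
            List.flatten_cons, List.flatten_nil, List.append_nil, List.append_assoc]
        exact myTrans c1 (heq ▸ c2)
    have final := myTrans (chain m le_rfl) (step m le_rfl)
    have hw'eq : (((List.range m).map (fun j => A' j ++ B (j+1))).flatten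
        ++ (A' m ++ ((List.Ico m m).map (fun j => B (j+1) ++ A (j+1))).flatten)) = w' := by
      have hsp := mySplit A' B' m w' (myWeq hw') m le_rfl
      rw [hsp]
      simp only [List.Ico.self_empty, List.map_nil, List.flatten_nil, List.append_nil]
      congr 1
      congr 1
      apply List.map_congr_left
      intro j hj
      rw [hB (j+1) (by omega) (Nat.succ_le_of_lt (List.mem_range.mp hj))]
    rwa [hw'eq] at final
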